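/- Let $G$ be a $d$-closed graph on vertex set $V$, let $U \subseteq V$ be a clique of size $d$ in $G$, and let $v, w \in V \setminus U$ be distinct vertices each adjacent to all vertices of $U$. Then $\{v,w\}$ is an edge of $G$. -/

import Mathlib

open scoped Classical

/-- The rigidity matrix of a framework `(G, p)` in `ℝ^d`: rows are indexed by edges,
columns by pairs (vertex, coordinate); the row of an edge `{u,v}` is supported on the
columns of `u` and `v`, where it equals `p u - p v` and `p v - p u` respectively. -/
noncomputable def rigidityMatrix {V : Type*} (G : SimpleGraph V) (d : ℕ)
    (p : V → Fin d → ℝ) : Matrix G.edgeSet (V × Fin d) ℝ :=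
  fun e wi =>
    if h : wi.1 ∈ (e : Sym2 V) then p wi.1 wi.2 - p (Sym2.Mem.other h) wi.2 else 0

/-- An embedding is generic if its `d|V|` coordinates are algebraically independent
over the rationals. -/
def IsGenericEmbedding {V : Type*} {d : ℕ} (p : V → Fin d → ℝ) : Prop :=
  AlgebraicIndependent ℚ (fun vi : V × Fin d => p vi.1 vi.2)

/-- A graph is `d`-closed if it equals its own `d`-rigidity closure: whenever adding a
non-edge `{u,v}` does not increase the rank of the generic rigidity matrix, `{u,v}` is
already an edge of `G`. -/
def IsDClosed {V : Type*} [Fintype V] (d : ℕ) (G : SimpleGraph V) : Prop :=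
  ∀ u v : V, u ≠ v →
    (∀ p : V → Fin d → ℝ, IsGenericEmbedding p →
      (rigidityMatrix (G ⊔ SimpleGraph.fromEdgeSet {s(u, v)}) d p).rank =
        (rigidityMatrix G d p).rank) →
    G.Adj u v

/-- Lemma 2.1. Let `G` be a `d`-closed graph, `U` a clique of size
`d` in `G`, and `v, w ∉ U` distinct vertices each adjacent to all of `U`. Then `vw` is
an edge of `G`. -/
noncomputable def qvec {V : Type*} (d : ℕ) (p : V → Fin d → ℝ) (x : V) : Fin (d+1) → ℝ :=
  fun j => if h : (j : ℕ) < d then p x ⟨j, h⟩ else 1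

lemma gen_li {V : Type*} {d : ℕ} {p : V → Fin d → ℝ} (hp : IsGenericEmbedding p)
    (f : Fin (d+1) → V) (hf : Function.Injective f) :
    LinearIndependent ℝ (fun i => qvec d p (f i)) := by
  set M : Matrix (Fin (d+1)) (Fin (d+1)) ℝ := Matrix.of (fun i j => qvec d p (f i) j) with hM
  have : LinearIndependent ℝ (fun i => M i) := by
    change LinearIndependent ℝ M.row
    rw [Matrix.linearIndependent_rows_iff_isUnit, Matrix.isUnit_iff_isUnit_det, isUnit_iff_ne_zero]
    set N : Matrix (Fin (d+1)) (Fin (d+1)) (MvPolynomial (V × Fin d) ℚ) :=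
      Matrix.of (fun i j => if h : (j : ℕ) < d then MvPolynomial.X (f i, ⟨j, h⟩) else 1) with hN
    set A := (MvPolynomial.aeval (fun vi : V × Fin d => p vi.1 vi.2) :
      MvPolynomial (V × Fin d) ℚ →ₐ[ℚ] ℝ) with hA
    have hmap : A.mapMatrix N = M := by
      ext i j
      simp only [AlgHom.mapMatrix_apply, Matrix.map_apply, hN, hM, Matrix.of_apply, qvec]
      split_ifs with h
      · simp [hA]
      · simp [hA]
    have hdet : M.det = A N.det := by rw [A.map_det, hmap]
    intro h0
    have hN0 : N.det = 0 := by
      apply hp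
      rw [show A N.det = 0 by rw [← hdet]; exact h0]
      simp
    -- evaluate at the 0/1 point
    set σ : V × Fin d → ℚ := fun vi =>
      if ∃ i : Fin (d+1), f i = vi.1 ∧ (i : ℕ) = (vi.2 : ℕ) then 1 else 0 with hσ
    have : (MvPolynomial.eval σ) N.det = 1 := by
      rw [RingHom.map_det]
      set P := (MvPolynomial.eval σ).mapMatrix N with hP
      have hPij : ∀ i j, P i j = if (i : ℕ) = (j : ℕ) then 1 else (if (j:ℕ) < d then 0 else 1) := by
        intro i j
        simp only [hP, RingHom.mapMatrix_apply, Matrix.map_apply, hN, Matrix.of_apply]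
        split_ifs with h h2 h3
        · simp only [MvPolynomial.eval_X, hσ]
          rw [if_pos]
          exact ⟨i, rfl, h2⟩
        · simp only [MvPolynomial.eval_X, hσ]
          rw [if_neg]
          rintro ⟨i', hi'1, hi'2⟩
          exact h2 (by rw [← hi'2, hf hi'1])
        · simp
        · simp
      have htri : P.BlockTriangular id := by
        intro i j hij
        rw [hPij]
        have h1 : (j : ℕ) < (i : ℕ) := hij
        rw [if_neg (by omega), if_pos (by omega)]
      rw [Matrix.det_of_upperTriangular htri]
      apply Finset.prod_eq_one
      intro i _
      rw [hPij, if_pos rfl]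
    rw [hN0] at this
    simp at this
  exact this

lemma gen_indep {V : Type*} [DecidableEq V] {d : ℕ} {p : V → Fin d → ℝ}
    (hp : IsGenericEmbedding p) (T : Finset V) (hT : T.card = d + 1) (b : V → ℝ)
    (hb : ∑ x ∈ T, b x • qvec d p x = 0) : ∀ x ∈ T, b x = 0 := by
  set e := T.equivFin with he
  set f : Fin (d+1) → V := fun i => (e.symm (Fin.cast hT.symm i) : V) with hfdef
  have hf : Function.Injective f := by
    intro i j hij
    have := e.symm.injective (Subtype.ext hij)
    simpa [Fin.ext_iff] using congrArg Fin.val this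
  have hli := gen_li hp f hf
  have hsum : ∑ i : Fin (d+1), b (f i) • qvec d p (f i) = 0 := by
    rw [← hb]
    rw [← Finset.sum_coe_sort T (fun x => b x • qvec d p x)]
    rw [← Equiv.sum_comp e.symm (fun i : T => b (i : V) • qvec d p (i : V))]
    exact Fintype.sum_equiv (finCongr hT.symm) _ _ (fun i => rfl)
  have hz := Fintype.linearIndependent_iff.mp hli (fun i => b (f i)) hsum
  intro x hx
  have : f (Fin.cast hT (e ⟨x, hx⟩)) = x := by
    simp [hfdef, Fin.cast_cast]
  rw [← this]
  exact hz _

noncomputable def rowVec {V : Type*} [DecidableEq V] {d : ℕ} (p : V → Fin d → ℝ) (x y : V) :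
    V × Fin d → ℝ := fun wi =>
  (if wi.1 = x then p x wi.2 - p y wi.2 else 0) + (if wi.1 = y then p y wi.2 - p x wi.2 else 0)

lemma rowVec_self {V : Type*} [DecidableEq V] {d : ℕ} (p : V → Fin d → ℝ) (x : V) :
    rowVec p x x = 0 := by
  funext wi
  simp [rowVec]

lemma rowVec_comm {V : Type*} [DecidableEq V] {d : ℕ} (p : V → Fin d → ℝ) (x y : V) :
    rowVec p x y = rowVec p y x := by
  funext wi
  simp [rowVec, add_comm]

lemma stress {V : Type*} [DecidableEq V] {d : ℕ} (p : V → Fin d → ℝ) (S : Finset V)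
    (a : V → ℝ) (h1 : ∑ x ∈ S, a x = 0) (h2 : ∀ i, ∑ x ∈ S, a x * p x i = 0) :
    ∑ x ∈ S, ∑ y ∈ S, (a x * a y) • rowVec p x y = 0 := by
  funext wi
  obtain ⟨z, i⟩ := wi
  simp only [Finset.sum_apply, Pi.smul_apply, smul_eq_mul, Pi.zero_apply, rowVec]
  have key : ∀ c : V, ∑ y ∈ S, a c * a y * (p c i - p y i) = 0 := by
    intro c
    have : ∑ y ∈ S, a c * a y * (p c i - p y i)
        = a c * p c i * (∑ y ∈ S, a y) - a c * (∑ y ∈ S, a y * p y i) := by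
      rw [Finset.mul_sum, Finset.mul_sum, ← Finset.sum_sub_distrib]
      exact Finset.sum_congr rfl (fun y _ => by ring)
    rw [this, h1, h2 i]
    ring
  have e1 : ∑ x ∈ S, ∑ y ∈ S, a x * a y * ((if z = x then p x i - p y i else 0)
      + (if z = y then p y i - p x i else 0)) = 0 := by
    have split : ∀ x y : V, a x * a y * ((if z = x then p x i - p y i else 0)
        + (if z = y then p y i - p x i else 0))
        = (if z = x then a x * a y * (p x i - p y i) else 0)
        + (if z = y then a y * a x * (p y i - p x i) else 0) := by
      intro x y
      split_ifs with h h' h' <;> ring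
    simp only [split, Finset.sum_add_distrib]
    have part1 : ∑ x ∈ S, ∑ y ∈ S, (if z = x then a x * a y * (p x i - p y i) else 0) = 0 := by
      have : ∀ x ∈ S, ∑ y ∈ S, (if z = x then a x * a y * (p x i - p y i) else 0)
          = if z = x then ∑ y ∈ S, a x * a y * (p x i - p y i) else 0 := by
        intro x _
        split_ifs <;> simp
      rw [Finset.sum_congr rfl this, Finset.sum_ite_eq]
      split_ifs with h
      · exact key z
      · rfl
    have part2 : ∑ x ∈ S, ∑ y ∈ S, (if z = y then a y * a x * (p y i - p x i) else 0) = 0 := by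
      rw [Finset.sum_comm]
      have : ∀ y ∈ S, ∑ x ∈ S, (if z = y then a y * a x * (p y i - p x i) else 0)
          = if z = y then ∑ x ∈ S, a y * a x * (p y i - p x i) else 0 := by
        intro y _
        split_ifs <;> simp
      rw [Finset.sum_congr rfl this, Finset.sum_ite_eq]
      split_ifs with h
      · exact key z
      · rfl
    rw [part1, part2, add_zero]
  exact e1

noncomputable def rowOf {V : Type*} {d : ℕ} (p : V → Fin d → ℝ) (e : Sym2 V) :
    V × Fin d → ℝ :=
  fun wi => if h : wi.1 ∈ e then p wi.1 wi.2 - p (Sym2.Mem.other h) wi.2 else 0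

lemma rigidityMatrix_eq_rowOf {V : Type*} (G : SimpleGraph V) (d : ℕ)
    (p : V → Fin d → ℝ) (e : G.edgeSet) :
    rigidityMatrix G d p e = rowOf p (e : Sym2 V) := rfl

lemma rowOf_mk {V : Type*} [DecidableEq V] {d : ℕ} (p : V → Fin d → ℝ) {x y : V}
    (hxy : x ≠ y) : rowOf p (s(x, y)) = rowVec p x y := by
  funext wi
  obtain ⟨z, i⟩ := wi
  simp only [rowOf, rowVec]
  by_cases h : z ∈ s(x, y)
  · rw [dif_pos h]
    have hspec := Sym2.other_spec h
    rcases Sym2.mem_iff.mp h with rfl | rfl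
    · have : Sym2.Mem.other h = y := by
        rcases Sym2.eq_iff.mp hspec with ⟨_, h2⟩ | ⟨h1, _⟩
        · exact h2
        · exact absurd h1 hxy
      rw [this, if_pos rfl, if_neg hxy, add_zero]
    · have : Sym2.Mem.other h = x := by
        rcases Sym2.eq_iff.mp hspec with ⟨h1, _⟩ | ⟨_, h2⟩
        · exact absurd h1.symm hxy
        · exact h2
      rw [this, if_neg (Ne.symm hxy), if_pos rfl, zero_add]
  · rw [dif_neg h]
    rw [Sym2.mem_iff, not_or] at h
    rw [if_neg h.1, if_neg h.2, add_zero]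

/-- Lemma 2.1. Let `G` be a `d`-closed graph, `U` a clique of size
`d` in `G`, and `v, w ∉ U` distinct vertices each adjacent to all of `U`. Then `vw` is
an edge of `G`. -/
theorem stmt_10 {V : Type*} [Fintype V] [DecidableEq V] (d : ℕ) (G : SimpleGraph V)
    (hclosed : IsDClosed d G) (U : Finset V) (hclique : G.IsClique (U : Set V))
    (hU : U.card = d) (v w : V) (hv : v ∉ U) (hw : w ∉ U) (hvw : v ≠ w)
    (hvU : ∀ u ∈ U, G.Adj v u) (hwU : ∀ u ∈ U, G.Adj w u) :
    G.Adj v w := by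
  apply hclosed v w hvw
  intro p hp
  set G' := G ⊔ SimpleGraph.fromEdgeSet {s(v, w)} with hG'
  -- the finset S = U ∪ {v,w}
  set S : Finset V := insert v (insert w U) with hSdef
  have hvS : v ∈ S := Finset.mem_insert_self _ _
  have hwS : w ∈ S := Finset.mem_insert_of_mem (Finset.mem_insert_self _ _)
  have hvnw : v ∉ insert w U := by
    simp only [Finset.mem_insert]
    push_neg
    exact ⟨hvw, hv⟩
  have hScard : S.card = d + 2 := by
    rw [hSdef, Finset.card_insert_of_notMem hvnw, Finset.card_insert_of_notMem hw, hU]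
  -- find a nontrivial affine dependence supported on S
  have hnli : ¬ LinearIndependent ℝ (fun x : S => qvec d p (x : V)) := by
    intro hli
    have h1 := hli.fintype_card_le_finrank
    rw [Module.finrank_pi, Fintype.card_coe, hScard, Fintype.card_fin] at h1
    omega
  obtain ⟨g, hg0, i0, hi0⟩ := Fintype.not_linearIndependent_iff.mp hnli
  set a : V → ℝ := fun x => if h : x ∈ S then g ⟨x, h⟩ else 0 with hadef
  have ha_mem : ∀ (x : V) (h : x ∈ S), a x = g ⟨x, h⟩ := by
    intro x h
    rw [hadef]
    simp [h]
  have ha_sum : ∑ x ∈ S, a x • qvec d p x = 0 := by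
    rw [← Finset.sum_coe_sort S (fun x => a x • qvec d p x), ← hg0]
    exact Finset.sum_congr rfl (fun i _ => by rw [ha_mem i i.2])
  have h1 : ∑ x ∈ S, a x = 0 := by
    have := congrFun ha_sum ⟨d, Nat.lt_succ_self d⟩
    simpa [qvec, Finset.sum_apply] using this
  have h2 : ∀ i : Fin d, ∑ x ∈ S, a x * p x i = 0 := by
    intro i
    have := congrFun ha_sum ⟨(i : ℕ), Nat.lt_succ_of_lt i.2⟩
    simpa [qvec, Finset.sum_apply, i.2] using this
  have hx0 : a (i0 : V) ≠ 0 := by rw [ha_mem _ i0.2]; simpa using hi0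
  -- nonvanishing at v and w
  have hnz : ∀ z : V, z ∈ S → a z = 0 → False := by
    intro z hz haz
    have hTcard : (S.erase z).card = d + 1 := by
      rw [Finset.card_erase_of_mem hz, hScard]
      omega
    have hTsum : ∑ x ∈ S.erase z, a x • qvec d p x = 0 := by
      have hadd := Finset.add_sum_erase S (fun x => a x • qvec d p x) hz
      simp only [haz, zero_smul, zero_add] at hadd
      rw [hadd]
      exact ha_sum
    have hall := gen_indep hp (S.erase z) hTcard a hTsum
    have hi0T : (i0 : V) ∈ S.erase z := by
      rw [Finset.mem_erase]
      refine ⟨?_, i0.2⟩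
      intro h
      exact hx0 (h ▸ haz)
    exact hx0 (hall _ hi0T)
  have hav : a v ≠ 0 := fun h => hnz v hvS h
  have haw : a w ≠ 0 := fun h => hnz w hwS h
  -- every pair inside S other than {v,w} is an edge of G
  have hedge : ∀ x ∈ S, ∀ y ∈ S, x ≠ y → ¬(x = v ∧ y = w) → ¬(x = w ∧ y = v) → G.Adj x y := by
    intro x hx y hy hxy hnvw hnwv
    rw [hSdef] at hx hy
    simp only [Finset.mem_insert] at hx hy
    rcases hx with rfl | rfl | hx
    · rcases hy with rfl | rfl | hy
      · exact absurd rfl hxy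
      · exact absurd ⟨rfl, rfl⟩ hnvw
      · exact hvU y hy
    · rcases hy with rfl | rfl | hy
      · exact absurd ⟨rfl, rfl⟩ hnwv
      · exact absurd rfl hxy
      · exact hwU y hy
    · rcases hy with rfl | rfl | hy
      · exact (hvU x hx).symm
      · exact (hwU x hx).symm
      · exact hclique hx hy hxy
  -- row of vw lies in span of rows of G
  set A := rigidityMatrix G d p with hA
  set Msp := Submodule.span ℝ (Set.range A) with hMsp
  have hrowmem : ∀ x ∈ S, ∀ y ∈ S, ¬(x = v ∧ y = w) → ¬(x = w ∧ y = v) → rowVec p x y ∈ Msp := by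
    intro x hx y hy hnvw hnwv
    by_cases hxy : x = y
    · rw [hxy, rowVec_self]
      exact Submodule.zero_mem _
    · have hadj : G.Adj x y := hedge x hx y hy hxy hnvw hnwv
      have : rowVec p x y = A ⟨s(x, y), hadj⟩ := by
        rw [hA, rigidityMatrix_eq_rowOf, rowOf_mk p hxy]
      rw [this]
      exact Submodule.subset_span (Set.mem_range_self _)
  have hkey : rowVec p v w ∈ Msp := by
    have hstress := stress p S a h1 h2
    rw [← Finset.sum_product'] at hstress
    have hmemvw : (v, w) ∈ S ×ˢ S := Finset.mem_product.mpr ⟨hvS, hwS⟩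
    have hmemwv : (w, v) ∈ (S ×ˢ S).erase (v, w) := by
      rw [Finset.mem_erase]
      exact ⟨by simp [hvw.symm], Finset.mem_product.mpr ⟨hwS, hvS⟩⟩
    set f : V × V → (V × Fin d → ℝ) := fun q => (a q.1 * a q.2) • rowVec p q.1 q.2 with hf
    have e1 := Finset.add_sum_erase (S ×ˢ S) f hmemvw
    have e2 := Finset.add_sum_erase ((S ×ˢ S).erase (v, w)) f hmemwv
    set P := ((S ×ˢ S).erase (v, w)).erase (w, v) with hP
    have htot : f (v, w) + (f (w, v) + ∑ q ∈ P, f q) = 0 := by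
      rw [e2, e1]
      exact hstress
    have hrest : ∑ q ∈ P, f q ∈ Msp := by
      apply Submodule.sum_mem
      intro q hq
      rw [hP, Finset.mem_erase, Finset.mem_erase, Finset.mem_product] at hq
      obtain ⟨hq1, hq2, hq3, hq4⟩ := hq
      apply Submodule.smul_mem
      apply hrowmem q.1 hq3 q.2 hq4
      · intro ⟨e1, e2⟩
        exact hq2 (Prod.ext e1 e2)
      · intro ⟨e1, e2⟩
        exact hq1 (Prod.ext e1 e2)
    have hfvw : f (v, w) + f (w, v) = (2 * (a v * a w)) • rowVec p v w := by
      rw [hf]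
      simp only
      rw [rowVec_comm p w v]
      rw [← add_smul]
      ring_nf
    have h2avw : (2 * (a v * a w)) • rowVec p v w ∈ Msp := by
      rw [← hfvw]
      have : f (v, w) + f (w, v) = -(∑ q ∈ P, f q) := by
        rw [eq_neg_iff_add_eq_zero, add_assoc]
        exact htot
      rw [this]
      exact Submodule.neg_mem _ hrest
    have hc : (2 * (a v * a w)) ≠ 0 := by
      apply mul_ne_zero two_ne_zero (mul_ne_zero hav haw)
    have := Submodule.smul_mem Msp (2 * (a v * a w))⁻¹ h2avw
    rwa [smul_smul, inv_mul_cancel₀ hc, one_smul] at this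
  -- conclude rank equality via row spans
  have hspan : Submodule.span ℝ (Set.range (rigidityMatrix G' d p)) = Msp := by
    apply le_antisymm
    · rw [Submodule.span_le]
      rintro r ⟨e, rfl⟩
      have he : (e : Sym2 V) ∈ G.edgeSet ∪ (SimpleGraph.fromEdgeSet {s(v, w)}).edgeSet := by
        rw [← SimpleGraph.edgeSet_sup]
        exact e.2
      rcases he with he | he
      · have : rigidityMatrix G' d p e = A ⟨(e : Sym2 V), he⟩ := by
          rw [hA, rigidityMatrix_eq_rowOf, rigidityMatrix_eq_rowOf]
        rw [this]
        exact Submodule.subset_span (Set.mem_range_self _)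
      · rw [SimpleGraph.edgeSet_fromEdgeSet] at he
        have hee : (e : Sym2 V) = s(v, w) := he.1
        have : rigidityMatrix G' d p e = rowVec p v w := by
          rw [rigidityMatrix_eq_rowOf, hee, rowOf_mk p hvw]
        rw [this]
        exact hkey
    · rw [Submodule.span_le]
      rintro r ⟨e, rfl⟩
      have he : (e : Sym2 V) ∈ G'.edgeSet := by
        rw [hG', SimpleGraph.edgeSet_sup]
        exact Or.inl e.2
      have : A e = rigidityMatrix G' d p ⟨(e : Sym2 V), he⟩ := by
        rw [hA, rigidityMatrix_eq_rowOf, rigidityMatrix_eq_rowOf]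
      rw [this]
      exact Submodule.subset_span (Set.mem_range_self _)
  rw [Matrix.rank_eq_finrank_span_row, Matrix.rank_eq_finrank_span_row]
  change Module.finrank ℝ (Submodule.span ℝ (Set.range (rigidityMatrix G' d p))) = Module.finrank ℝ Msp
  rw [hspan]
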